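/- Let f : ℝ³ → ℝ be a Schwartz function. Then for every x ∈ ℝ³ one has ∫_{ℝ³} (x−y)·∇f(y) / |x−y| dy = 2 ∫_{ℝ³} f(y) / |x−y| dy. -/

import Mathlib

set_option maxHeartbeats 1000000

open MeasureTheory Set Metric Filter
open scoped SchwartzMap Topology NNReal ENNReal

noncomputable section

abbrev R3 := EuclideanSpace ℝ (Fin 3)




lemma comp_id (g : R3 → ℝ) :
    (fun p : sphere (0:R3) 1 × Ioi (0:ℝ) => g ((p.2 : ℝ) • (p.1 : R3))) ∘
      (homeomorphUnitSphereProd R3) = fun x : ({0}ᶜ : Set R3) => g x := by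
  funext x
  simp only [Function.comp_apply, homeomorphUnitSphereProd_apply_fst_coe,
    homeomorphUnitSphereProd_apply_snd_coe]
  rw [smul_inv_smul₀ (norm_ne_zero_iff.2 x.2)]

lemma comp_id' (g : R3 → ℝ) :
    (fun x : ({0}ᶜ : Set R3) =>
      g ((((homeomorphUnitSphereProd R3) x).2 : ℝ) • (((homeomorphUnitSphereProd R3) x).1 : R3)))
      = fun x : ({0}ᶜ : Set R3) => g x := by
  have := comp_id g
  simpa [Function.comp_def] using this

lemma polar_integral (g : R3 → ℝ) :
    ∫ z, g z = ∫ p : sphere (0:R3) 1 × Ioi (0:ℝ),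
      g ((p.2 : ℝ) • (p.1 : R3)) ∂((volume : Measure R3).toSphere.prod (.volumeIoiPow 2)) := by
  have h3 : Module.finrank ℝ R3 = 3 := by simp [finrank_euclideanSpace_fin]
  calc ∫ z, g z = ∫ x : ({0}ᶜ : Set R3), g x ∂((volume : Measure R3).comap (↑)) := by
        rw [MeasureTheory.integral_subtype_comap (measurableSet_singleton _).compl fun x ↦ g x,
          MeasureTheory.restrict_compl_singleton]
    _ = _ := by
        have := ((volume : Measure R3).measurePreserving_homeomorphUnitSphereProd).integral_comp
          (Homeomorph.measurableEmbedding _)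
          (fun p : sphere (0:R3) 1 × Ioi (0:ℝ) => g ((p.2 : ℝ) • (p.1 : R3)))
        rw [h3] at this
        rw [← this]
        exact (congrArg (fun F => ∫ x : ({0}ᶜ : Set R3), F x ∂_) (comp_id' g)).symm

lemma polar_integrable_iff (g : R3 → ℝ) :
    Integrable (fun p : sphere (0:R3) 1 × Ioi (0:ℝ) => g ((p.2 : ℝ) • (p.1 : R3)))
      ((volume : Measure R3).toSphere.prod (.volumeIoiPow 2)) ↔ Integrable g volume := by
  have h3 : Module.finrank ℝ R3 = 3 := by simp [finrank_euclideanSpace_fin]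
  have hemb := MeasurableEmbedding.subtype_coe (measurableSet_singleton (0:R3)).compl
  have h1 := ((volume : Measure R3).measurePreserving_homeomorphUnitSphereProd).integrable_comp_emb
    (Homeomorph.measurableEmbedding _)
    (g := fun p : sphere (0:R3) 1 × Ioi (0:ℝ) => g ((p.2 : ℝ) • (p.1 : R3)))
  rw [h3] at h1
  rw [← h1, comp_id]
  have h2 : Integrable (fun x : ({0}ᶜ : Set R3) => g x) ((volume : Measure R3).comap (↑)) ↔
      Integrable g ((volume : Measure R3).restrict {(0:R3)}ᶜ) := by
    rw [← map_comap_subtype_coe (measurableSet_singleton _).compl,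
      hemb.integrable_map_iff]
    rfl
  rw [h2, MeasureTheory.restrict_compl_singleton]


lemma vIP_integral (φ : ℝ → ℝ) :
    ∫ r : Ioi (0:ℝ), φ r ∂(Measure.volumeIoiPow 2) = ∫ r in Ioi (0:ℝ), r ^ 2 * φ r := by
  simp only [Measure.volumeIoiPow, ENNReal.ofReal]
  rw [integral_withDensity_eq_integral_smul (by
      exact (measurable_subtype_coe.pow_const _).real_toNNReal)]
  rw [MeasureTheory.integral_subtype_comap measurableSet_Ioi
      (fun a : ℝ => Real.toNNReal (a ^ 2) • φ a)]
  refine setIntegral_congr_fun measurableSet_Ioi fun r hr => ?_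
  rw [NNReal.smul_def, Real.coe_toNNReal _ (pow_nonneg hr.out.le _)]
  simp [smul_eq_mul]

lemma vIP_integrable_iff (φ : ℝ → ℝ) :
    Integrable (fun r : Ioi (0:ℝ) => φ r) (Measure.volumeIoiPow 2) ↔
      IntegrableOn (fun r : ℝ => r ^ 2 * φ r) (Ioi 0) := by
  simp only [Measure.volumeIoiPow, ENNReal.ofReal]
  rw [
    integrable_withDensity_iff_integrable_coe_smul
      (by exact (measurable_subtype_coe.pow_const _).real_toNNReal)]
  · constructor
    · intro h
      have h2 : Integrable ((fun r : ℝ => r ^ 2 * φ r) ∘ (Subtype.val : Ioi (0:ℝ) → ℝ))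
          (Measure.comap Subtype.val volume) := by
        refine h.congr ?_
        refine Filter.Eventually.of_forall fun r => ?_
        simp only [Function.comp_apply, NNReal.smul_def,
          Real.coe_toNNReal _ (pow_nonneg r.2.out.le 2), smul_eq_mul]
      rwa [(MeasurableEmbedding.subtype_coe measurableSet_Ioi).integrable_map_iff.symm,
        map_comap_subtype_coe measurableSet_Ioi] at h2
    · intro h
      have h2 : Integrable ((fun r : ℝ => r ^ 2 * φ r) ∘ (Subtype.val : Ioi (0:ℝ) → ℝ))
          (Measure.comap Subtype.val volume) := by
        rwa [(MeasurableEmbedding.subtype_coe measurableSet_Ioi).integrable_map_iff.symm,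
          map_comap_subtype_coe measurableSet_Ioi]
      refine h2.congr ?_
      refine Filter.Eventually.of_forall fun r => ?_
      simp only [Function.comp_apply, NNReal.smul_def,
        Real.coe_toNNReal _ (pow_nonneg r.2.out.le 2), smul_eq_mul]


variable {V : Type*} [NormedAddCommGroup V] [NormedSpace ℝ V]

lemma decay4 (g : 𝓢(R3, V)) : ∃ C, 0 ≤ C ∧ ∀ y, (1 + ‖y‖) ^ 4 * ‖g y‖ ≤ C := by
  obtain ⟨C₀, h₀⟩ := g.decay' 0 0
  obtain ⟨C₄, h₄⟩ := g.decay' 4 0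
  simp only [norm_iteratedFDeriv_zero, pow_zero, one_mul] at h₀ h₄
  have hC₀ : 0 ≤ C₀ := le_trans (norm_nonneg _) (h₀ 0)
  have hC₄ : 0 ≤ C₄ := le_trans (by positivity) (h₄ 0)
  refine ⟨16 * (C₀ + C₄), by positivity, fun y => ?_⟩
  have ht : (0:ℝ) ≤ ‖y‖ := norm_nonneg _
  have hgy : (0:ℝ) ≤ ‖g y‖ := norm_nonneg _
  rcases le_total ‖y‖ 1 with h | h
  · have h1 : (1 + ‖y‖) ^ 4 ≤ 16 := by
      calc (1 + ‖y‖) ^ 4 ≤ 2 ^ 4 := by gcongr <;> linarith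
        _ = 16 := by norm_num
    calc (1 + ‖y‖) ^ 4 * ‖g y‖ ≤ 16 * ‖g y‖ := by gcongr
      _ ≤ 16 * C₀ := by gcongr; exact h₀ y
      _ ≤ 16 * (C₀ + C₄) := by linarith
  · have h1 : (1 + ‖y‖) ^ 4 ≤ 16 * ‖y‖ ^ 4 := by
      calc (1 + ‖y‖) ^ 4 ≤ (2 * ‖y‖) ^ 4 := by gcongr; linarith
        _ = 16 * ‖y‖ ^ 4 := by ring
    calc (1 + ‖y‖) ^ 4 * ‖g y‖ ≤ 16 * ‖y‖ ^ 4 * ‖g y‖ := by gcongr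
      _ = 16 * (‖y‖ ^ 4 * ‖g y‖) := by ring
      _ ≤ 16 * C₄ := by gcongr; exact h₄ y
      _ ≤ 16 * (C₀ + C₄) := by linarith

lemma ray_est {g : R3 → V} {C : ℝ} (hC : 0 ≤ C) (hg : ∀ y, (1 + ‖y‖) ^ 4 * ‖g y‖ ≤ C)
    (x : R3) {ω : R3} (hω : ‖ω‖ = 1) {k : ℕ} (hk : k ≤ 2) {r : ℝ} (hr : 0 < r) :
    r ^ k * ‖g (x + r • ω)‖ ≤ (C * (1 + ‖x‖) ^ 4) * (1 + ‖r‖) ^ (-(2:ℝ)) := by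
  set y := x + r • ω with hy
  have hN : (1:ℝ) ≤ 1 + ‖y‖ := by simp [norm_nonneg]
  have ha : (0:ℝ) ≤ ‖x‖ := norm_nonneg _
  have hgy : (0:ℝ) ≤ ‖g y‖ := norm_nonneg _
  have hry : r - ‖x‖ ≤ ‖y‖ := by
    have h2 : ‖r • ω‖ ≤ ‖y‖ + ‖x‖ := by
      calc ‖r • ω‖ = ‖y - x‖ := by rw [hy]; congr 1; abel
        _ ≤ ‖y‖ + ‖x‖ := norm_sub_le _ _
    rw [norm_smul, hω, Real.norm_eq_abs, abs_of_pos hr, mul_one] at h2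
    linarith
  have key : (1 + r) ≤ (1 + ‖x‖) * (1 + ‖y‖) := by nlinarith
  have h1r : (0:ℝ) < 1 + r := by linarith
  rw [Real.norm_eq_abs, abs_of_pos hr, Real.rpow_neg (by linarith),
    show ((2:ℝ)) = ((2:ℕ):ℝ) by norm_num, Real.rpow_natCast,
    ← div_eq_mul_inv, le_div_iff₀ (by positivity)]
  have e1 : r ^ k ≤ (1 + r) ^ 2 := by
    calc r ^ k ≤ (1 + r) ^ k := by gcongr; linarith
      _ ≤ (1 + r) ^ 2 := pow_le_pow_right₀ (by linarith) hk
  calc r ^ k * ‖g y‖ * (1 + r) ^ 2 ≤ (1 + r) ^ 2 * ‖g y‖ * (1 + r) ^ 2 := by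
        gcongr
    _ = (1 + r) ^ 4 * ‖g y‖ := by ring
    _ ≤ ((1 + ‖x‖) * (1 + ‖y‖)) ^ 4 * ‖g y‖ := by gcongr
    _ = (1 + ‖x‖) ^ 4 * ((1 + ‖y‖) ^ 4 * ‖g y‖) := by ring
    _ ≤ (1 + ‖x‖) ^ 4 * C := by gcongr; exact hg y
    _ = C * (1 + ‖x‖) ^ 4 := by ring

-- dominator integrable
lemma dom_integrable (D : ℝ) :
    IntegrableOn (fun r : ℝ => D * (1 + ‖r‖) ^ (-(2:ℝ))) (Ioi 0) := by
  have base : Integrable (fun r : ℝ => (1 + ‖r‖) ^ (-(2:ℝ))) :=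
    integrable_one_add_norm (by norm_num)
  exact (base.const_mul D).integrableOn


lemma ray_deriv (f : 𝓢(R3, ℝ)) (x ω : R3) (r : ℝ) :
    HasDerivAt (fun s : ℝ => f (x + s • ω)) (fderiv ℝ f (x + r • ω) ω) r := by
  have hc : HasDerivAt (fun s : ℝ => x + s • ω) ω r := by
    simpa using ((hasDerivAt_id r).smul_const ω).const_add x
  exact (f.differentiableAt.hasFDerivAt).comp_hasDerivAt r hc

lemma dom_tendsto (D : ℝ) :
    Tendsto (fun r : ℝ => D * (1 + ‖r‖) ^ (-(2:ℝ))) atTop (nhds 0) := by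
  have h1 : Tendsto (fun r : ℝ => 1 + ‖r‖) atTop atTop := by
    apply tendsto_atTop_add_const_left
    exact tendsto_norm_atTop_atTop.comp tendsto_id
  have h2 := (tendsto_rpow_neg_atTop (y := 2) (by norm_num)).comp h1
  simpa using h2.const_mul D

lemma cont_fderiv (f : 𝓢(R3, ℝ)) : Continuous (fun y => fderiv ℝ f y) :=
  (f.smooth ⊤).continuous_fderiv (by norm_num)

section
variable (f : 𝓢(R3, ℝ)) (x : R3)

lemma ray_int_phi' {ω : R3} (hω : ‖ω‖ = 1) :
    IntegrableOn (fun r : ℝ => r ^ 2 * fderiv ℝ f (x + r • ω) ω) (Ioi 0) := by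
  obtain ⟨C, hC, hbd⟩ := decay4 (SchwartzMap.fderivCLM ℝ R3 ℝ f)
  simp only [SchwartzMap.fderivCLM_apply] at hbd
  refine Integrable.mono' (dom_integrable (C * (1 + ‖x‖) ^ 4)) ?_ ?_
  · apply Continuous.aestronglyMeasurable
    apply Continuous.mul (by fun_prop)
    exact ((cont_fderiv f).comp (by fun_prop)).clm_apply continuous_const
  · filter_upwards [ae_restrict_mem measurableSet_Ioi] with r hr
    have h1 : ‖fderiv ℝ f (x + r • ω) ω‖ ≤ ‖fderiv ℝ f (x + r • ω)‖ := by
      calc ‖fderiv ℝ f (x + r • ω) ω‖ ≤ ‖fderiv ℝ f (x + r • ω)‖ * ‖ω‖ :=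
            (fderiv ℝ f (x + r • ω)).le_opNorm ω
        _ = ‖fderiv ℝ f (x + r • ω)‖ := by rw [hω, mul_one]
    calc ‖r ^ 2 * fderiv ℝ f (x + r • ω) ω‖ = r ^ 2 * ‖fderiv ℝ f (x + r • ω) ω‖ := by
          rw [norm_mul, Real.norm_eq_abs (r^2), abs_of_nonneg (by positivity), Real.norm_eq_abs]
      _ ≤ r ^ 2 * ‖fderiv ℝ f (x + r • ω)‖ := by
          have : (0:ℝ) < r := hr
          gcongr
      _ ≤ (C * (1 + ‖x‖) ^ 4) * (1 + ‖r‖) ^ (-(2:ℝ)) := ray_est hC hbd x hω le_rfl hr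

lemma ray_int_phi_k {ω : R3} (hω : ‖ω‖ = 1) {k : ℕ} (hk : k ≤ 2) :
    IntegrableOn (fun r : ℝ => r ^ k * f (x + r • ω)) (Ioi 0) := by
  obtain ⟨C, hC, hbd⟩ := decay4 f
  refine Integrable.mono' (dom_integrable (C * (1 + ‖x‖) ^ 4)) ?_ ?_
  · apply Continuous.aestronglyMeasurable
    exact Continuous.mul (by fun_prop) (f.continuous.comp (by fun_prop))
  · filter_upwards [ae_restrict_mem measurableSet_Ioi] with r hr
    have hr' : (0:ℝ) < r := hr
    calc ‖r ^ k * f (x + r • ω)‖ = r ^ k * ‖f (x + r • ω)‖ := by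
          rw [norm_mul, Real.norm_eq_abs (r^k), abs_of_nonneg (by positivity), Real.norm_eq_abs]
      _ ≤ (C * (1 + ‖x‖) ^ 4) * (1 + ‖r‖) ^ (-(2:ℝ)) := ray_est hC hbd x hω hk hr

end
section
variable (f : 𝓢(R3, ℝ)) (x : R3)

lemma ray_identity {ω : R3} (hω : ‖ω‖ = 1) :
    ∫ r in Ioi (0:ℝ), r ^ 2 * fderiv ℝ f (x + r • ω) ω
      = - (2 * ∫ r in Ioi (0:ℝ), r * f (x + r • ω)) := by
  set φ : ℝ → ℝ := fun r => f (x + r • ω) with hφ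
  set u : ℝ → ℝ := fun r => r ^ 2 * φ r with hu
  have hderiv : ∀ r : ℝ, HasDerivAt u (2 * r * φ r + r ^ 2 * fderiv ℝ f (x + r • ω) ω) r := by
    intro r
    have h1 : HasDerivAt (fun s : ℝ => s ^ 2) (2 * r) r := by
      simpa using hasDerivAt_pow 2 r
    have h2 := ray_deriv f x ω r
    exact h1.mul h2
  have intA := ray_int_phi' f x hω
  have intB := (ray_int_phi_k f x hω (k := 1) (by norm_num))
  have intB2 : IntegrableOn (fun r : ℝ => 2 * r * φ r) (Ioi 0) := by
    have h2 : IntegrableOn (fun r : ℝ => 2 * (r ^ 1 * f (x + r • ω))) (Ioi 0) :=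
      intB.const_mul 2
    refine h2.congr_fun (fun r _ => ?_) measurableSet_Ioi
    simp [hφ]; ring
  have intSum : IntegrableOn (fun r : ℝ => 2 * r * φ r + r ^ 2 * fderiv ℝ f (x + r • ω) ω)
      (Ioi 0) := intB2.add intA
  have hcont : ContinuousWithinAt u (Ici 0) 0 := by
    apply Continuous.continuousWithinAt
    exact Continuous.mul (by fun_prop) (f.continuous.comp (by fun_prop))
  have htend : Tendsto u atTop (𝓝 0) := by
    obtain ⟨C, hC, hbd⟩ := decay4 f
    apply squeeze_zero_norm' (a := fun r => (C * (1 + ‖x‖) ^ 4) * (1 + ‖r‖) ^ (-(2:ℝ)))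
    · filter_upwards [eventually_gt_atTop (0:ℝ)] with r hr
      calc ‖u r‖ = r ^ 2 * ‖φ r‖ := by
            rw [hu]; rw [norm_mul, Real.norm_eq_abs (r^2), abs_of_nonneg (by positivity)]
        _ ≤ (C * (1 + ‖x‖) ^ 4) * (1 + ‖r‖) ^ (-(2:ℝ)) := ray_est hC hbd x hω le_rfl hr
    · exact dom_tendsto _
  have key := integral_Ioi_of_hasDerivAt_of_tendsto hcont
    (fun r _ => hderiv r) intSum (by simpa [hu, hφ] using htend)
  have hu0 : u 0 = 0 := by simp [hu]
  rw [hu0, sub_zero] at key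
  have split := integral_add intB2 intA
  rw [key] at split
  have h2B : ∫ r in Ioi (0:ℝ), 2 * r * φ r = 2 * ∫ r in Ioi (0:ℝ), r * φ r := by
    rw [← integral_const_mul]
    refine setIntegral_congr_fun measurableSet_Ioi fun r _ => by ring
  rw [h2B] at split
  linarith [split]

end

section main

variable (f : 𝓢(R3, ℝ)) (x : R3)

lemma norm_smul_sphere (ω : sphere (0:R3) 1) {r : ℝ} (hr : 0 < r) :
    ‖r • (ω : R3)‖ = r := by
  rw [norm_smul, mem_sphere_zero_iff_norm.mp ω.2, Real.norm_eq_abs, abs_of_pos hr, mul_one]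

lemma gL_eq (ω : sphere (0:R3) 1) {r : ℝ} (hr : 0 < r) :
    fderiv ℝ (⇑f) (x + r • (ω:R3)) (-(r • (ω:R3))) / ‖r • (ω:R3)‖
      = -(fderiv ℝ (⇑f) (x + r • (ω:R3)) (ω:R3)) := by
  rw [map_neg, _root_.map_smul, norm_smul_sphere ω hr, smul_eq_mul]
  field_simp

-- continuity of the product-level integrands
lemma contL : Continuous (fun p : sphere (0:R3) 1 × Ioi (0:ℝ) =>
    fderiv ℝ (⇑f) (x + (p.2:ℝ) • (p.1:R3)) (-((p.2:ℝ) • (p.1:R3))) / ‖(p.2:ℝ) • (p.1:R3)‖) := by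
  have hc : Continuous (fun p : sphere (0:R3) 1 × Ioi (0:ℝ) => (p.2:ℝ) • (p.1:R3)) := by
    fun_prop
  have hden : ∀ p : sphere (0:R3) 1 × Ioi (0:ℝ), ‖(p.2:ℝ) • (p.1:R3)‖ ≠ 0 := by
    intro p
    rw [norm_smul_sphere p.1 p.2.2]
    exact ne_of_gt p.2.2
  refine Continuous.div ?_ hc.norm hden
  exact (((cont_fderiv f).comp (by fun_prop)).clm_apply hc.neg)

lemma contR : Continuous (fun p : sphere (0:R3) 1 × Ioi (0:ℝ) =>
    f (x + (p.2:ℝ) • (p.1:R3)) / ‖(p.2:ℝ) • (p.1:R3)‖) := by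
  have hc : Continuous (fun p : sphere (0:R3) 1 × Ioi (0:ℝ) => (p.2:ℝ) • (p.1:R3)) := by
    fun_prop
  have hden : ∀ p : sphere (0:R3) 1 × Ioi (0:ℝ), ‖(p.2:ℝ) • (p.1:R3)‖ ≠ 0 := by
    intro p
    rw [norm_smul_sphere p.1 p.2.2]
    exact ne_of_gt p.2.2
  exact Continuous.div (f.continuous.comp (by fun_prop)) hc.norm hden

-- per-ω integrable of L integrand (as ℝ-function with the r² weight)
lemma intL_ray (ω : sphere (0:R3) 1) :
    IntegrableOn (fun r : ℝ =>
      r ^ 2 * (fderiv ℝ (⇑f) (x + r • (ω:R3)) (-(r • (ω:R3))) / ‖r • (ω:R3)‖)) (Ioi 0) := by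
  have hω : ‖(ω:R3)‖ = 1 := mem_sphere_zero_iff_norm.mp ω.2
  have hneg : IntegrableOn
      (fun r : ℝ => -(r ^ 2 * fderiv ℝ (⇑f) (x + r • (ω:R3)) (ω:R3))) (Ioi 0) :=
    (ray_int_phi' f x hω).neg
  refine hneg.congr_fun (fun r hr => ?_) measurableSet_Ioi
  simp only [Pi.neg_apply]
  rw [gL_eq f x ω hr]
  ring

lemma intR_ray (ω : sphere (0:R3) 1) :
    IntegrableOn (fun r : ℝ =>
      r ^ 2 * (f (x + r • (ω:R3)) / ‖r • (ω:R3)‖)) (Ioi 0) := by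
  have hω : ‖(ω:R3)‖ = 1 := mem_sphere_zero_iff_norm.mp ω.2
  refine (ray_int_phi_k f x hω (k := 1) (by norm_num)).congr_fun
    (fun r hr => ?_) measurableSet_Ioi
  have hr' : (0:ℝ) < r := hr
  rw [norm_smul_sphere ω hr']
  field_simp

lemma intL_prod : Integrable (fun p : sphere (0:R3) 1 × Ioi (0:ℝ) =>
    fderiv ℝ (⇑f) (x + (p.2:ℝ) • (p.1:R3)) (-((p.2:ℝ) • (p.1:R3))) / ‖(p.2:ℝ) • (p.1:R3)‖)
    ((volume : Measure R3).toSphere.prod (.volumeIoiPow 2)) := by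
  have hASM : AEStronglyMeasurable (fun p : sphere (0:R3) 1 × Ioi (0:ℝ) =>
      fderiv ℝ (⇑f) (x + (p.2:ℝ) • (p.1:R3)) (-((p.2:ℝ) • (p.1:R3))) / ‖(p.2:ℝ) • (p.1:R3)‖)
      ((volume : Measure R3).toSphere.prod (Measure.volumeIoiPow 2)) :=
    (contL f x).aestronglyMeasurable
  refine (integrable_prod_iff hASM).mpr ⟨Filter.Eventually.of_forall fun ω => ?_, ?_⟩
  · exact (vIP_integrable_iff (fun s : ℝ =>
      fderiv ℝ (⇑f) (x + s • (ω:R3)) (-(s • (ω:R3))) / ‖s • (ω:R3)‖)).mpr (intL_ray f x ω)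
  · obtain ⟨C, hC, hbd⟩ := decay4 (SchwartzMap.fderivCLM ℝ R3 ℝ f)
    simp only [SchwartzMap.fderivCLM_apply] at hbd
    set D := C * (1 + ‖x‖) ^ 4 with hD
    set K := ∫ r in Ioi (0:ℝ), D * (1 + ‖r‖) ^ (-(2:ℝ)) with hK
    refine Integrable.mono' (integrable_const K) (hASM.norm.integral_prod_right') ?_
    refine Filter.Eventually.of_forall fun ω => ?_
    have hω : ‖(ω:R3)‖ = 1 := mem_sphere_zero_iff_norm.mp ω.2
    have hnn : 0 ≤ ∫ r : Ioi (0:ℝ), ‖fderiv ℝ (⇑f) (x + (r:ℝ) • (ω:R3)) (-((r:ℝ) • (ω:R3))) /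
        ‖(r:ℝ) • (ω:R3)‖‖ ∂(Measure.volumeIoiPow 2) :=
      integral_nonneg fun r => norm_nonneg _
    rw [Real.norm_of_nonneg hnn]
    rw [vIP_integral (fun s : ℝ =>
      ‖fderiv ℝ (⇑f) (x + s • (ω:R3)) (-(s • (ω:R3))) / ‖s • (ω:R3)‖‖)]
    refine le_trans (setIntegral_mono_on ?_ (dom_integrable D) measurableSet_Ioi ?_) le_rfl
    · have hInt : IntegrableOn (fun r : ℝ =>
          ‖r ^ 2 * (fderiv ℝ (⇑f) (x + r • (ω:R3)) (-(r • (ω:R3))) / ‖r • (ω:R3)‖)‖) (Ioi 0) :=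
        (intL_ray f x ω).norm
      refine hInt.congr_fun (fun r hr => ?_) measurableSet_Ioi
      have hr' : (0:ℝ) < r := hr
      dsimp only; rw [norm_mul, Real.norm_eq_abs (r^2), abs_of_nonneg (by positivity)]
    · intro r hr
      have hr' : (0:ℝ) < r := hr
      rw [gL_eq f x ω hr', norm_neg]
      have h1 : ‖fderiv ℝ (⇑f) (x + r • (ω:R3)) (ω:R3)‖ ≤ ‖fderiv ℝ (⇑f) (x + r • (ω:R3))‖ := by
        calc ‖fderiv ℝ (⇑f) (x + r • (ω:R3)) (ω:R3)‖
            ≤ ‖fderiv ℝ (⇑f) (x + r • (ω:R3))‖ * ‖(ω:R3)‖ :=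
              (fderiv ℝ (⇑f) (x + r • (ω:R3))).le_opNorm _
          _ = _ := by rw [hω, mul_one]
      calc r ^ 2 * ‖fderiv ℝ (⇑f) (x + r • (ω:R3)) (ω:R3)‖
          ≤ r ^ 2 * ‖fderiv ℝ (⇑f) (x + r • (ω:R3))‖ := by gcongr
        _ ≤ D * (1 + ‖r‖) ^ (-(2:ℝ)) := ray_est hC hbd x hω le_rfl hr'

lemma intR_prod : Integrable (fun p : sphere (0:R3) 1 × Ioi (0:ℝ) =>
    f (x + (p.2:ℝ) • (p.1:R3)) / ‖(p.2:ℝ) • (p.1:R3)‖)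
    ((volume : Measure R3).toSphere.prod (.volumeIoiPow 2)) := by
  have hASM : AEStronglyMeasurable (fun p : sphere (0:R3) 1 × Ioi (0:ℝ) =>
      f (x + (p.2:ℝ) • (p.1:R3)) / ‖(p.2:ℝ) • (p.1:R3)‖)
      ((volume : Measure R3).toSphere.prod (Measure.volumeIoiPow 2)) :=
    (contR f x).aestronglyMeasurable
  refine (integrable_prod_iff hASM).mpr ⟨Filter.Eventually.of_forall fun ω => ?_, ?_⟩
  · exact (vIP_integrable_iff (fun s : ℝ =>
      f (x + s • (ω:R3)) / ‖s • (ω:R3)‖)).mpr (intR_ray f x ω)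
  · obtain ⟨C, hC, hbd⟩ := decay4 f
    set D := C * (1 + ‖x‖) ^ 4 with hD
    set K := ∫ r in Ioi (0:ℝ), D * (1 + ‖r‖) ^ (-(2:ℝ)) with hK
    refine Integrable.mono' (integrable_const K) (hASM.norm.integral_prod_right') ?_
    refine Filter.Eventually.of_forall fun ω => ?_
    have hω : ‖(ω:R3)‖ = 1 := mem_sphere_zero_iff_norm.mp ω.2
    have hnn : 0 ≤ ∫ r : Ioi (0:ℝ), ‖f (x + (r:ℝ) • (ω:R3)) / ‖(r:ℝ) • (ω:R3)‖‖
        ∂(Measure.volumeIoiPow 2) := integral_nonneg fun r => norm_nonneg _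
    rw [Real.norm_of_nonneg hnn]
    rw [vIP_integral (fun s : ℝ => ‖f (x + s • (ω:R3)) / ‖s • (ω:R3)‖‖)]
    refine le_trans (setIntegral_mono_on ?_ (dom_integrable D) measurableSet_Ioi ?_) le_rfl
    · have hInt : IntegrableOn (fun r : ℝ =>
          ‖r ^ 2 * (f (x + r • (ω:R3)) / ‖r • (ω:R3)‖)‖) (Ioi 0) :=
        (intR_ray f x ω).norm
      refine hInt.congr_fun (fun r hr => ?_) measurableSet_Ioi
      have hr' : (0:ℝ) < r := hr
      dsimp only; rw [norm_mul, Real.norm_eq_abs (r^2), abs_of_nonneg (by positivity)]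
    · intro r hr
      have hr' : (0:ℝ) < r := hr
      rw [norm_smul_sphere ω hr']
      have e1 : r ^ 2 * ‖f (x + r • (ω:R3)) / r‖ = r ^ 1 * ‖f (x + r • (ω:R3))‖ := by
        rw [norm_div, Real.norm_eq_abs r, abs_of_pos hr']
        field_simp
      rw [e1]
      exact ray_est hC hbd x hω (by norm_num) hr'

end main

/-- `∫ (x−y)·∇f(y)/|x−y| dy = 2 ∫ f(y)/|x−y| dy` for Schwartz `f`. -/
theorem stmt_10 (f : 𝓢(R3, ℝ)) (x : R3) :
    (∫ y : R3, fderiv ℝ (⇑f) y (x - y) / ‖x - y‖) = 2 * ∫ y : R3, f y / ‖x - y‖ := by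
  have tL : (∫ y : R3, fderiv ℝ (⇑f) y (x - y) / ‖x - y‖)
      = ∫ z : R3, fderiv ℝ (⇑f) (x + z) (-z) / ‖z‖ := by
    rw [← integral_add_left_eq_self (fun y => fderiv ℝ (⇑f) y (x - y) / ‖x - y‖) x]
    refine integral_congr_ae (Filter.Eventually.of_forall fun z => ?_)
    simp only [sub_add_cancel_left, norm_neg]
  have tR : (∫ y : R3, f y / ‖x - y‖) = ∫ z : R3, f (x + z) / ‖z‖ := by
    rw [← integral_add_left_eq_self (fun y => f y / ‖x - y‖) x]
    refine integral_congr_ae (Filter.Eventually.of_forall fun z => ?_)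
    simp only [sub_add_cancel_left, norm_neg]
  rw [tL, tR,
    polar_integral (fun z => fderiv ℝ (⇑f) (x + z) (-z) / ‖z‖),
    polar_integral (fun z => f (x + z) / ‖z‖),
    integral_prod _ (intL_prod f x), integral_prod _ (intR_prod f x),
    ← integral_const_mul]
  refine integral_congr_ae (Filter.Eventually.of_forall fun ω => ?_)
  have hω : ‖(ω:R3)‖ = 1 := mem_sphere_zero_iff_norm.mp ω.2
  simp only []
  rw [vIP_integral (fun s : ℝ => fderiv ℝ (⇑f) (x + s • (ω:R3)) (-(s • (ω:R3))) / ‖s • (ω:R3)‖),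
    vIP_integral (fun s : ℝ => f (x + s • (ω:R3)) / ‖s • (ω:R3)‖)]
  have eL : ∫ r in Ioi (0:ℝ),
      r ^ 2 * (fderiv ℝ (⇑f) (x + r • (ω:R3)) (-(r • (ω:R3))) / ‖r • (ω:R3)‖)
      = ∫ r in Ioi (0:ℝ), -(r ^ 2 * fderiv ℝ (⇑f) (x + r • (ω:R3)) (ω:R3)) := by
    refine setIntegral_congr_fun measurableSet_Ioi fun r hr => ?_
    have hr' : (0:ℝ) < r := hr
    rw [gL_eq f x ω hr']
    ring
  have eR : ∫ r in Ioi (0:ℝ), r ^ 2 * (f (x + r • (ω:R3)) / ‖r • (ω:R3)‖)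
      = ∫ r in Ioi (0:ℝ), r * f (x + r • (ω:R3)) := by
    refine setIntegral_congr_fun measurableSet_Ioi fun r hr => ?_
    have hr' : (0:ℝ) < r := hr
    rw [norm_smul_sphere ω hr']
    field_simp
  rw [eL, eR, integral_neg, ray_identity f x hω]
  ring
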